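/- If x : ℝ → ℝ is differentiable, T-periodic (x(t + T) = x(t) for all t), and satisfies x′(t) + κ·x(t) ≤ c for all t ∈ ℝ, then x(t) ≤ c/κ for all t ∈ ℝ. -/

import Mathlib

theorem stmt_11
    (T κ c : ℝ) (hT : 0 < T) (hκ : 0 < κ) (hc : 0 ≤ c)
    (x x' : ℝ → ℝ)
    (hderiv : ∀ t : ℝ, HasDerivAt x (x' t) t)
    (hper : ∀ t : ℝ, x (t + T) = x t)
    (hineq : ∀ t : ℝ, x' t + κ * x t ≤ c) :
    ∀ t : ℝ, x t ≤ c / κ := by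
  set g : ℝ → ℝ := fun t => Real.exp (κ * t) * (x t - c / κ) with hg
  have hgd : ∀ t : ℝ, HasDerivAt g (Real.exp (κ * t) * (x' t + κ * x t - c)) t := by
    intro t
    have h1 : HasDerivAt (fun t => Real.exp (κ * t)) (κ * Real.exp (κ * t)) t := by
      have := ((hasDerivAt_id t).const_mul κ).exp
      simpa [mul_comm] using this
    have h2 : HasDerivAt (fun t => x t - c / κ) (x' t) t := (hderiv t).sub_const _
    have := h1.mul h2
    convert this using 1
    · rfl
    · rfl
    · rfl
    field_simp
    ring
  have hanti : Antitone g := by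
    apply antitone_of_deriv_nonpos
    · exact fun t => (hgd t).differentiableAt
    · intro t
      rw [(hgd t).deriv]
      have : x' t + κ * x t - c ≤ 0 := by linarith [hineq t]
      exact mul_nonpos_of_nonneg_of_nonpos (Real.exp_pos _).le this
  intro t
  by_contra h
  push_neg at h
  have hd : 0 < x t - c / κ := by linarith
  have := hanti (le_add_of_nonneg_right hT.le : t ≤ t + T)
  rw [hg] at this
  simp only [hper t] at this
  have hexp : Real.exp (κ * t) < Real.exp (κ * (t + T)) := by
    apply Real.exp_lt_exp.mpr
    nlinarith
  nlinarith [Real.exp_pos (κ * t)]
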